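/- arXiv:0807.0653 — 7 statements merged into one kernel-verified Lean document; each statement's English description precedes it below -/
import Mathlib

section
/- For every integer j < 0 and every integer p ≥ 2, F_{j,p}(-2/3) = 0 if and only if p + 3j = 1, where F_{j,p}(t) = ((p-1)!)² · ∏_{i=1}^{p-1} (t + (i+j)/(i(p-i))). -/
/-- `F j p t = ((p-1)!)² · ∏_{i=1}^{p-1} (t + (i+j)/(i(p-i)))`. -/
noncomputable def F (j : ℤ) (p : ℕ) (t : ℚ) : ℚ :=
  ((Nat.factorial (p - 1) : ℚ)) ^ 2 *
    ∏ i ∈ Finset.Icc 1 (p - 1), (t + ((i : ℚ) + (j : ℚ)) / ((i : ℚ) * ((p : ℚ) - (i : ℚ))))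

/-- For `j < 0` and `p ≥ 2`, `F_{j,p}(-2/3) = 0` if and only if `p + 3j = 1`. -/
theorem F_at_neg_two_thirds_eq_zero_iff (j : ℤ) (hj : j < 0) (p : ℕ) (hp : 2 ≤ p) :
    F j p (-2/3) = 0 ↔ (p : ℤ) + 3 * j = 1 := by
  have hfac : ((Nat.factorial (p - 1) : ℚ)) ^ 2 ≠ 0 := by
    have := Nat.factorial_pos (p - 1)
    positivity
  rw [F, mul_eq_zero]
  simp only [hfac, false_or]
  rw [Finset.prod_eq_zero_iff]
  -- characterize a zero factor
  have key : ∀ i ∈ Finset.Icc 1 (p - 1),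
      ((-2/3 : ℚ) + ((i : ℚ) + (j : ℚ)) / ((i : ℚ) * ((p : ℚ) - (i : ℚ))) = 0 ↔
        3 * ((i : ℤ) + j) = 2 * ((i : ℤ) * ((p : ℤ) - i))) := by
    intro i hi
    simp only [Finset.mem_Icc] at hi
    obtain ⟨h1, h2⟩ := hi
    have hip : i < p := by omega
    have hi0 : (i : ℚ) ≠ 0 := by positivity
    have hpi : (p : ℚ) - (i : ℚ) ≠ 0 := by
      have : (i : ℚ) < (p : ℚ) := by exact_mod_cast hip
      linarith
    rw [div_add_div _ _ (by norm_num : (3:ℚ) ≠ 0) (mul_ne_zero hi0 hpi),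
      div_eq_zero_iff]
    constructor
    · intro h
      rcases h with h | h
      · have : (3 : ℚ) * ((i : ℚ) + (j : ℚ)) = 2 * ((i : ℚ) * ((p : ℚ) - i)) := by
          ring_nf at h ⊢
          linarith
        exact_mod_cast this
      · exact absurd h (by exact mul_ne_zero (by norm_num) (mul_ne_zero hi0 hpi))
    · intro h
      left
      have : (3 : ℚ) * ((i : ℚ) + (j : ℚ)) = 2 * ((i : ℚ) * ((p : ℚ) - i)) := by
        exact_mod_cast h
      ring_nf
      linarith
  constructor
  · rintro ⟨i, hi, hzero⟩
    rw [key i hi] at hzero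
    simp only [Finset.mem_Icc] at hi
    obtain ⟨h1, h2⟩ := hi
    have hi1 : (1 : ℤ) ≤ (i : ℤ) := by exact_mod_cast h1
    have hip : (i : ℤ) ≤ (p : ℤ) - 1 := by
      have : i ≤ p - 1 := h2
      omega
    -- 3j = i*(2(p-i)-3) < 0 so 2(p-i) < 3, hence p - i = 1
    have h3j : 3 * j = (i : ℤ) * (2 * ((p : ℤ) - i) - 3) := by ring_nf; linarith [hzero]
    have hneg : (i : ℤ) * (2 * ((p : ℤ) - i) - 3) < 0 := by omega
    have hlt : 2 * ((p : ℤ) - i) - 3 < 0 := by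
      by_contra hge
      push_neg at hge
      nlinarith
    have hpi1 : (p : ℤ) - i = 1 := by omega
    nlinarith [hzero, hpi1]
  · intro h
    refine ⟨p - 1, ?_, ?_⟩
    · simp only [Finset.mem_Icc]
      omega
    · rw [key (p - 1) (by simp only [Finset.mem_Icc]; omega)]
      have hc : ((p - 1 : ℕ) : ℤ) = (p : ℤ) - 1 := by
        have : 1 ≤ p := by omega
        push_cast [this]
        ring
      rw [hc]
      nlinarith [h]
end

section
/- If integers p ≥ 2, j < 0, and i with 1 ≤ i ≤ p-1 satisfy 2i² + (3-2p)i + 3j = 0, then i = p - 1 and p - 1 + 3j = 0. -/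
/-- If integers `p ≥ 2`, `j < 0` and `1 ≤ i ≤ p-1` satisfy `2i² + (3-2p)i + 3j = 0`,
then `i = p - 1` and `p - 1 + 3j = 0`. -/
theorem root_forces_boundary (p j i : ℤ) (hp : 2 ≤ p) (hj : j < 0)
    (h1 : 1 ≤ i) (h2 : i ≤ p - 1) (h : 2 * i ^ 2 + (3 - 2 * p) * i + 3 * j = 0) :
    i = p - 1 ∧ p - 1 + 3 * j = 0 := by
  have hi : i = p - 1 := by nlinarith [mul_le_mul_of_nonneg_left h2 (by linarith : (0:ℤ) ≤ i)]
  subst hi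
  constructor
  · rfl
  · nlinarith
end

section
/- The formulas e_i f_j = j f_{i+j} for j ≥ 0, e_i f_j = (i+j) f_{i+j} for j < 0 and i + j ≤ 0, and e_i f_j = f_{i+j} for j < 0 and i + j > 0, define a module structure over the Lie algebra L₁ on the vector space with basis {f_j : j ∈ ℤ}; that is, e_i (e_k f_j) - e_k (e_i f_j) = (k - i) e_{i+k} f_j for all i, k ≥ 1 and j ∈ ℤ. -/
/-- The structure coefficient of the action of `e_i` on `f_j`: `e_i f_j = coeff i j • f_{i+j}`. -/
noncomputable def coeff (i : ℕ) (j : ℤ) : ℚ :=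
  if 0 ≤ j then (j : ℚ) else if (i : ℤ) + j ≤ 0 then ((i : ℤ) + j : ℤ) else 1

/-- The action of `e_i` on the free module `ℤ →₀ ℚ` with basis `(f_j)_{j ∈ ℤ}`,
where `f_j = Finsupp.single j 1`. -/
noncomputable def act (i : ℕ) (v : ℤ →₀ ℚ) : ℤ →₀ ℚ :=
  v.sum fun j c => (c * coeff i j) • Finsupp.single ((i : ℤ) + j) (1 : ℚ)

lemma act_single (i : ℕ) (j : ℤ) (c : ℚ) :
    act i (Finsupp.single j c) = (c * coeff i j) • Finsupp.single ((i : ℤ) + j) 1 := by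
  unfold act
  rw [Finsupp.sum_single_index]
  simp

lemma coeff_identity (i k : ℕ) (hi : 1 ≤ i) (hk : 1 ≤ k) (j : ℤ) :
    coeff k j * coeff i ((k : ℤ) + j) - coeff i j * coeff k ((i : ℤ) + j) =
      ((k : ℚ) - (i : ℚ)) * coeff (i + k) j := by
  simp only [coeff]
  split_ifs
  all_goals try (exfalso; omega)
  all_goals try (push_cast; ring1)
  all_goals have h : j = -(k : ℤ) ∨ j = -(i : ℤ) := by omega
  all_goals rcases h with rfl | rfl
  all_goals try (exfalso; omega)
  all_goals try (push_cast; ring1)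
  all_goals obtain rfl : i = k := by omega
  all_goals push_cast
  all_goals ring1

/-- The formulas defining `M̃` give a module structure over `L₁`:
`e_i (e_k f_j) - e_k (e_i f_j) = (k - i) e_{i+k} f_j` for all `i, k ≥ 1`, `j ∈ ℤ`. -/
theorem act_defines_module (i k : ℕ) (hi : 1 ≤ i) (hk : 1 ≤ k) (j : ℤ) :
    act i (act k (Finsupp.single j 1)) - act k (act i (Finsupp.single j 1)) =
      ((k : ℚ) - (i : ℚ)) • act (i + k) (Finsupp.single j 1) := by
  simp only [act_single, Finsupp.smul_single, smul_eq_mul, mul_one, one_mul]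
  rw [show ((i : ℤ)) + ((k : ℤ) + j) = ((i + k : ℕ) : ℤ) + j by push_cast; ring,
    show ((k : ℤ)) + ((i : ℤ) + j) = ((i + k : ℕ) : ℤ) + j by push_cast; ring,
    ← Finsupp.single_sub, coeff_identity i k hi hk j]
end

section
/- In the module M̃ over L₁, for j < 0 and positive integers i_1, ..., i_s with i_1 + ⋯ + i_s + j > 0, one has e_{i_1} ⋯ e_{i_{s-1}} e_{i_s} f_j = (∏_{l=2}^{s} (i_l + ⋯ + i_s + j)) f_{j + i_1 + ⋯ + i_s}. -/
lemma act_smul_single (i : ℕ) (c : ℚ) (m : ℤ) :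
    act i (c • Finsupp.single m 1) = (c * coeff i m) • Finsupp.single ((i : ℤ) + m) 1 := by
  rw [Finsupp.smul_single, smul_eq_mul, mul_one, act, Finsupp.sum_single_index]
  simp

/-- The total scalar picked up by iterated application. -/
noncomputable def g : List ℕ → ℤ → ℚ
  | [], _ => 1
  | i :: t, j => g t j * coeff i (j + t.sum)

lemma foldr_eq (L : List ℕ) (j : ℤ) :
    List.foldr act (Finsupp.single j 1) L = g L j • Finsupp.single (j + (L.sum : ℤ)) 1 := by
  induction L with
  | nil => simp [g]
  | cons i t ih =>
    rw [List.foldr_cons, ih, act_smul_single, g]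
    congr 1
    push_cast [List.sum_cons]
    ring

lemma prod_Icc_one (n : ℕ) (f : ℕ → ℚ) :
    ∏ l ∈ Finset.Icc 1 n, f l = ∏ l ∈ Finset.range n, f (l + 1) := by
  rw [← Finset.Ico_add_one_right_eq_Icc, Finset.prod_Ico_eq_prod_range]
  exact Finset.prod_congr (by simp) (fun l _ => by rw [Nat.add_comm])

lemma g_nonpos (L : List ℕ) (h1 : ∀ x ∈ L, 1 ≤ x) (j : ℤ) (hj : j < 0)
    (h : (L.sum : ℤ) + j ≤ 0) :
    g L j = ∏ l ∈ Finset.range L.length, (((L.drop l).sum : ℚ) + (j : ℚ)) := by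
  induction L with
  | nil => simp [g]
  | cons i t ih =>
    have hi : (1 : ℤ) ≤ (i : ℤ) := by exact_mod_cast h1 i List.mem_cons_self
    have hsc : ((i :: t).sum : ℤ) = (i : ℤ) + (t.sum : ℤ) := by push_cast [List.sum_cons]; ring
    have htlt : (t.sum : ℤ) + j < 0 := by linarith
    rw [g, ih (fun x hx => h1 x (List.mem_cons_of_mem _ hx)) (le_of_lt htlt)]
    rw [coeff, if_neg (by linarith : ¬ (0 : ℤ) ≤ j + t.sum),
      if_pos (by linarith : (i : ℤ) + (j + t.sum) ≤ 0)]
    rw [List.length_cons, Finset.prod_range_succ']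
    simp only [List.drop_succ_cons, List.drop_zero]
    have hc : (((i : ℤ) + (j + (t.sum : ℤ)) : ℤ) : ℚ) = (((i :: t).sum : ℚ) + (j : ℚ)) := by
      simp only [Int.cast_add, Int.cast_natCast]
      rw [List.sum_cons, Nat.cast_add]
      ring
    rw [hc]

lemma g_pos (L : List ℕ) (h1 : ∀ x ∈ L, 1 ≤ x) (j : ℤ) (hj : j < 0)
    (h : 0 < (L.sum : ℤ) + j) :
    g L j = ∏ l ∈ Finset.Icc 1 (L.length - 1), (((L.drop l).sum : ℚ) + (j : ℚ)) := by
  induction L with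
  | nil => simp at h; omega
  | cons i t ih =>
    have hi : (1 : ℤ) ≤ (i : ℤ) := by exact_mod_cast h1 i List.mem_cons_self
    have hsc : ((i :: t).sum : ℤ) = (i : ℤ) + (t.sum : ℤ) := by push_cast [List.sum_cons]; ring
    have hRHS : (∏ l ∈ Finset.Icc 1 ((i :: t).length - 1),
        ((((i :: t).drop l).sum : ℚ) + (j : ℚ)))
        = ∏ l ∈ Finset.range t.length, (((t.drop l).sum : ℚ) + (j : ℚ)) := by
      rw [List.length_cons, Nat.add_sub_cancel, prod_Icc_one]
      exact Finset.prod_congr rfl (fun l _ => by rw [List.drop_succ_cons])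
    rw [hRHS, g]
    by_cases h0 : 0 < (t.sum : ℤ) + j
    · rw [ih (fun x hx => h1 x (List.mem_cons_of_mem _ hx)) h0]
      rw [coeff, if_pos (by linarith : (0 : ℤ) ≤ j + t.sum)]
      obtain ⟨n, hn⟩ : ∃ n, t.length = n + 1 := by
        rcases t with _ | ⟨a, u⟩
        · simp at h0; omega
        · exact ⟨_, rfl⟩
      rw [hn, Finset.prod_range_succ', Nat.add_sub_cancel, prod_Icc_one]
      simp only [List.drop_zero]
      have hc : ((j + (t.sum : ℤ) : ℤ) : ℚ) = ((t.sum : ℚ) + (j : ℚ)) := by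
        simp only [Int.cast_add, Int.cast_natCast]; ring
      rw [hc]
    · push_neg at h0
      by_cases h00 : (t.sum : ℤ) + j = 0
      · rw [coeff, if_pos (by linarith : (0 : ℤ) ≤ j + t.sum)]
        have ht0 : 0 < t.length := by
          rcases t with _ | ⟨a, u⟩
          · simp at h00; omega
          · simp
        have hz : ((t.drop 0).sum : ℚ) + (j : ℚ) = 0 := by
          rw [List.drop_zero]
          have h2 := congrArg (Int.cast : ℤ → ℚ) h00
          simpa only [Int.cast_add, Int.cast_natCast, Int.cast_zero] using h2
        rw [Finset.prod_eq_zero (Finset.mem_range.mpr ht0) hz]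
        have hz2 : ((j + (t.sum : ℤ) : ℤ) : ℚ) = 0 := by
          have : j + (t.sum : ℤ) = 0 := by linarith
          rw [this]; norm_num
        rw [hz2]
        ring
      · have hlt : (t.sum : ℤ) + j < 0 := lt_of_le_of_ne h0 h00
        rw [coeff, if_neg (by linarith : ¬ (0 : ℤ) ≤ j + t.sum),
          if_neg (by linarith : ¬ (i : ℤ) + (j + t.sum) ≤ 0), mul_one]
        exact g_nonpos t (fun x hx => h1 x (List.mem_cons_of_mem _ hx)) j hj (le_of_lt hlt)

/-- In `M̃`, for `j < 0` and positive integers `i_1, …, i_s` with `i_1 + ⋯ + i_s + j > 0`,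
`e_{i_1} ⋯ e_{i_s} f_j = (∏_{l=2}^{s} (i_l + ⋯ + i_s + j)) f_{j + i_1 + ⋯ + i_s}`
(the factor for index `l` being the sum of the last `s - l + 1` entries plus `j`). -/
theorem iterated_action_formula (L : List ℕ) (hL : ∀ x ∈ L, 1 ≤ x)
    (j : ℤ) (hj : j < 0) (hsum : 0 < (L.sum : ℤ) + j) :
    List.foldr act (Finsupp.single j 1) L =
      (∏ l ∈ Finset.Icc 1 (L.length - 1), (((L.drop l).sum : ℚ) + (j : ℚ))) •
        Finsupp.single (j + (L.sum : ℤ)) (1 : ℚ) := by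
  rw [foldr_eq, g_pos L hL j hj hsum]
end

section
/- For integers j < 0 and p ≥ 2 with p + j > 0, the sum over all compositions (i_1,...,i_s) of p of c_p(i_1,...,i_s) t^{p-s} ∏_{l=2}^{s}(i_l + ⋯ + i_s + j) equals ((p-1)!)² ∏_{i=1}^{p-1} (t + (i+j)/(i(p-i))), as polynomials in t over ℚ. -/
open Classical

/-- The Benoit–Saint-Aubin coefficient `c_p(i_1,…,i_s) = ∏ k(p-k)`, the product over
`1 ≤ k < p` such that `k` is not a partial sum `i_1 + ⋯ + i_l`, `l = 1, …, s-1`. -/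
noncomputable def bsaCoeff (p : ℕ) (L : List ℕ) : ℕ :=
  ∏ k ∈ (Finset.Ico 1 p).filter
      (fun k => ∀ l ∈ Finset.Ico 1 L.length, (L.take l).sum ≠ k),
    k * (p - k)

variable {p : ℕ}

noncomputable def PS (c : Composition p) : Finset ℕ :=
  (Finset.Ico 1 c.length).image (fun l => c.sizeUpTo l)

lemma sizeUpTo_lt_of (c : Composition p) {l1 l2 : ℕ} (h : l1 < l2) (h2 : l2 ≤ c.length) :
    c.sizeUpTo l1 < c.sizeUpTo l2 :=
  lt_of_lt_of_le (c.sizeUpTo_strict_mono (lt_of_lt_of_le h h2)) (c.monotone_sizeUpTo h)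

lemma mem_E_iff (hp : 2 ≤ p) (c : Composition p) (i : Fin (p-1)) :
    i ∈ (compositionAsSetEquiv p) ((compositionEquiv p) c) ↔ ((i:ℕ)+1) ∈ PS c := by
  have hb : ((compositionEquiv p) c).boundaries = c.boundaries := rfl
  have hlen : c.length ≤ p := c.length_le
  have hip : (i : ℕ) + 1 < p := by have := i.2; omega
  simp only [compositionAsSetEquiv, Equiv.coe_fn_mk, Set.mem_toFinset, Set.mem_setOf_eq, hb]
  rw [Composition.boundaries, Finset.mem_map]
  simp only [Finset.mem_univ, true_and, Function.Embedding.coeFn_mk, PS, Finset.mem_image,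
    Finset.mem_Ico]
  constructor
  · rintro ⟨l, hl⟩
    have hval : c.sizeUpTo (l : ℕ) = 1 + (i : ℕ) := by
      have := congrArg Fin.val hl
      simpa [Composition.boundary] using this
    have hl0 : (l : ℕ) ≠ 0 := by
      intro h0
      rw [h0] at hval; simp [Composition.sizeUpTo_zero] at hval; omega
    have hll : (l : ℕ) < c.length := by
      rcases Nat.lt_or_ge (l : ℕ) c.length with h | h
      · exact h
      · exfalso
        have : c.sizeUpTo (l : ℕ) = p := c.sizeUpTo_ofLength_le _ h
        omega
    exact ⟨l, ⟨by omega, hll⟩, by omega⟩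
  · rintro ⟨l, ⟨hl1, hl2⟩, hval⟩
    refine ⟨⟨l, by omega⟩, ?_⟩
    ext
    simp [Composition.boundary]
    omega

lemma PS_subset (c : Composition p) : PS c ⊆ Finset.Ico 1 p := by
  intro k hk
  rcases Finset.mem_image.1 hk with ⟨l, hl, rfl⟩
  rcases Finset.mem_Ico.1 hl with ⟨h1, h2⟩
  rw [Finset.mem_Ico]
  constructor
  · have := sizeUpTo_lt_of c (show 0 < l by omega) (by omega)
    simp [Composition.sizeUpTo_zero] at this; omega
  · have := sizeUpTo_lt_of c h2 le_rfl
    simpa [Composition.sizeUpTo_length] using this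

lemma PS_injOn (c : Composition p) :
    Set.InjOn (fun l => c.sizeUpTo l) (Finset.Ico 1 c.length) := by
  intro l1 h1 l2 h2 h
  simp only [Finset.coe_Ico, Set.mem_Ico] at h1 h2
  dsimp only at h
  rcases Nat.lt_trichotomy l1 l2 with hlt | heq | hgt
  · have := sizeUpTo_lt_of c hlt (by omega); omega
  · exact heq
  · have := sizeUpTo_lt_of c hgt (by omega); omega

lemma card_PS (c : Composition p) : (PS c).card = c.length - 1 := by
  rw [PS, Finset.card_image_of_injOn (PS_injOn c), Nat.card_Ico]

lemma PS_inj (hp : 2 ≤ p) : Function.Injective (PS : Composition p → Finset ℕ) := by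
  intro c c' h
  have hE : (compositionAsSetEquiv p) ((compositionEquiv p) c) =
      (compositionAsSetEquiv p) ((compositionEquiv p) c') := by
    ext i
    rw [mem_E_iff hp, mem_E_iff hp, h]
  exact (compositionEquiv p).injective ((compositionAsSetEquiv p).injective hE)

lemma PS_surj (hp : 2 ≤ p) (S : Finset ℕ) (hS : S ⊆ Finset.Ico 1 p) :
    ∃ c : Composition p, PS c = S := by
  set s : Finset (Fin (p-1)) := Finset.univ.filter (fun i => (i:ℕ)+1 ∈ S) with hs
  set c : Composition p := (compositionEquiv p).symm ((compositionAsSetEquiv p).symm s) with hc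
  have hE : (compositionAsSetEquiv p) ((compositionEquiv p) c) = s := by
    simp [hc]
  refine ⟨c, ?_⟩
  ext k
  constructor
  · intro hk
    rcases Finset.mem_Ico.1 (PS_subset c hk) with ⟨h1, h2⟩
    have hmem : (⟨k-1, by omega⟩ : Fin (p-1)) ∈ s := by
      rw [← hE, mem_E_iff hp]
      simpa [show k - 1 + 1 = k by omega] using hk
    rw [hs, Finset.mem_filter] at hmem
    simpa [show k - 1 + 1 = k by omega] using hmem.2
  · intro hk
    rcases Finset.mem_Ico.1 (hS hk) with ⟨h1, h2⟩
    have hmem : (⟨k-1, by omega⟩ : Fin (p-1)) ∈ s := by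
      rw [hs, Finset.mem_filter]
      simpa [show k - 1 + 1 = k by omega] using hk
    rw [← hE, mem_E_iff hp] at hmem
    simpa [show k - 1 + 1 = k by omega] using hmem

lemma bsaCoeff_eq (c : Composition p) :
    bsaCoeff p c.blocks = ∏ k ∈ Finset.Ico 1 p \ PS c, k * (p - k) := by
  rw [bsaCoeff]
  congr 1
  ext k
  simp only [Finset.mem_filter, Finset.mem_sdiff, PS, Finset.mem_image, Finset.mem_Ico,
    Composition.blocks_length, Composition.sizeUpTo, not_exists, not_and]


/-- For `j < 0`, `p ≥ 2`, `p + j > 0`, the sum over all compositions `(i_1,…,i_s)` of `p`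
of `c_p(i_1,…,i_s) t^{p-s} ∏_{l=2}^{s}(i_l + ⋯ + i_s + j)` equals
`((p-1)!)² ∏_{i=1}^{p-1} (t + (i+j)/(i(p-i)))`, for every `t : ℚ`. -/
theorem bsa_sum_over_compositions (p : ℕ) (hp : 2 ≤ p) (j : ℤ) (hj : j < 0)
    (hpj : 0 < (p : ℤ) + j) (t : ℚ) :
    ∑ c : Composition p,
        (bsaCoeff p c.blocks : ℚ) * t ^ (p - c.length) *
          ∏ l ∈ Finset.Icc 1 (c.length - 1), (((c.blocks.drop l).sum : ℚ) + (j : ℚ)) =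
      ((Nat.factorial (p - 1) : ℚ)) ^ 2 *
        ∏ i ∈ Finset.Icc 1 (p - 1),
          (t + ((i : ℚ) + (j : ℚ)) / ((i : ℚ) * ((p : ℚ) - (i : ℚ)))) := by 
  have hIcc : Finset.Icc 1 (p-1) = Finset.Ico 1 p := by
    rw [← Finset.Ico_add_one_right_eq_Icc]; congr 1; omega
  -- factorial squared as a product
  have hfact : ((Nat.factorial (p - 1) : ℚ)) ^ 2
      = ∏ i ∈ Finset.Ico 1 p, ((i:ℚ) * ((p:ℚ) - (i:ℚ))) := by
    have h1 : ∏ i ∈ Finset.Ico 1 p, (i : ℕ) = Nat.factorial (p-1) := by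
      have := Finset.prod_Ico_id_eq_factorial (p-1)
      rw [show p - 1 + 1 = p by omega] at this
      exact this
    have h2 : ∏ i ∈ Finset.Ico 1 p, (p - i : ℕ) = ∏ i ∈ Finset.Ico 1 p, (i : ℕ) := by
      apply Finset.prod_nbij' (fun k => p - k) (fun k => p - k)
      · intro a ha; rw [Finset.mem_Ico] at *; omega
      · intro a ha; rw [Finset.mem_Ico] at *; omega
      · intro a ha; rw [Finset.mem_Ico] at ha; omega
      · intro a ha; rw [Finset.mem_Ico] at ha; omega
      · intro a ha; rfl
    have hcast : ∀ i ∈ Finset.Ico 1 p, ((i:ℚ) * ((p:ℚ) - (i:ℚ)))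
        = ((i * (p - i) : ℕ) : ℚ) := by
      intro i hi; rw [Finset.mem_Ico] at hi
      push_cast [Nat.cast_sub (by omega : i ≤ p)]
      ring
    rw [Finset.prod_congr rfl hcast, ← Nat.cast_prod, Finset.prod_mul_distrib, h2, h1]
    push_cast
    ring
  rw [hIcc, hfact, ← Finset.prod_mul_distrib]
  have hfac2 : ∀ i ∈ Finset.Ico 1 p,
      (i:ℚ) * ((p:ℚ) - (i:ℚ)) * (t + ((i:ℚ) + (j:ℚ)) / ((i:ℚ) * ((p:ℚ) - (i:ℚ))))
        = (i:ℚ) * ((p:ℚ) - (i:ℚ)) * t + ((i:ℚ) + (j:ℚ)) := by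
    intro i hi
    rw [Finset.mem_Ico] at hi
    have hi0 : (i:ℚ) ≠ 0 := Nat.cast_ne_zero.2 (by omega)
    have hpi : (p:ℚ) - (i:ℚ) ≠ 0 := by
      have : (i:ℚ) < (p:ℚ) := by exact_mod_cast hi.2
      linarith
    field_simp
  rw [Finset.prod_congr rfl hfac2]
  have hre : ∏ i ∈ Finset.Ico 1 p, ((i:ℚ) * ((p:ℚ) - (i:ℚ)) * t + ((i:ℚ) + (j:ℚ)))
      = ∏ i ∈ Finset.Ico 1 p,
          (((p:ℚ) - (i:ℚ) + (j:ℚ)) + ((i:ℚ) * ((p:ℚ) - (i:ℚ)) * t)) := by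
    apply Finset.prod_nbij' (fun k => p - k) (fun k => p - k)
    · intro a ha; rw [Finset.mem_Ico] at *; omega
    · intro a ha; rw [Finset.mem_Ico] at *; omega
    · intro a ha; rw [Finset.mem_Ico] at ha; omega
    · intro a ha; rw [Finset.mem_Ico] at ha; omega
    · intro a ha; rw [Finset.mem_Ico] at ha
      push_cast [Nat.cast_sub (by omega : a ≤ p)]
      ring
  rw [hre, Finset.prod_add]
  refine Finset.sum_bij (fun c _ => PS c) ?_ ?_ ?_ ?_
  · intro c _; exact Finset.mem_powerset.2 (PS_subset c)
  · intro c1 _ c2 _ h; exact PS_inj hp h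
  · intro S hS
    rcases PS_surj hp S (Finset.mem_powerset.1 hS) with ⟨c, hc⟩
    exact ⟨c, Finset.mem_univ _, hc⟩
  · intro c _
    have hlen1 : 0 < c.length := c.length_pos_of_pos (by omega)
    have hlenp : c.length ≤ p := c.length_le
    have hcard : (Finset.Ico 1 p \ PS c).card = p - c.length := by
      rw [Finset.card_sdiff_of_subset (PS_subset c), Nat.card_Ico, card_PS]; omega
    have hA : ∏ i ∈ Finset.Ico 1 p \ PS c, ((i:ℚ) * ((p:ℚ) - (i:ℚ)) * t)
        = (bsaCoeff p c.blocks : ℚ) * t ^ (p - c.length) := by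
      rw [Finset.prod_mul_distrib, Finset.prod_const, hcard, bsaCoeff_eq, Nat.cast_prod]
      congr 1
      apply Finset.prod_congr rfl
      intro k hk
      have hk' := (Finset.mem_sdiff.1 hk).1
      rw [Finset.mem_Ico] at hk'
      push_cast [Nat.cast_sub (by omega : k ≤ p)]
      ring
    have hB : ∏ l ∈ Finset.Icc 1 (c.length - 1), (((c.blocks.drop l).sum : ℚ) + (j:ℚ))
        = ∏ k ∈ PS c, ((p:ℚ) - (k:ℚ) + (j:ℚ)) := by
      have hI : Finset.Icc 1 (c.length - 1) = Finset.Ico 1 c.length := by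
        rw [← Finset.Ico_add_one_right_eq_Icc]; congr 1; omega
      rw [hI, PS, Finset.prod_image
        (fun x hx y hy h => PS_injOn c (by simpa using hx) (by simpa using hy) h)]
      apply Finset.prod_congr rfl
      intro l hl
      have h1 : (c.blocks.take l).sum + (c.blocks.drop l).sum = p := by
        rw [List.sum_take_add_sum_drop, c.blocks_sum]
      have h2 : ((c.blocks.drop l).sum : ℚ) = (p:ℚ) - (c.sizeUpTo l : ℚ) := by
        have h3 : c.sizeUpTo l = (c.blocks.take l).sum := rfl
        have h4 : ((c.blocks.take l).sum : ℚ) + ((c.blocks.drop l).sum : ℚ) = (p:ℚ) := by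
          exact_mod_cast h1
        rw [h3]; linarith
      rw [h2]
    rw [hB, ← hA]
    ring
end

section
/- In the universal enveloping algebra of the Lie algebra L₁ (with basis e_i, i ≥ 1, and [e_i,e_j]=(j-i)e_{i+j}), the identity (e₁³ - 6e₂e₁ + 6e₃)(e₁² - (2/3)e₂) = (e₁⁴ - (20/3)e₂e₁² + 4e₂² + 4e₃e₁ - 4e₄)e₁ holds. -/
open UniversalEnvelopingAlgebra

theorem key {A : Type*} [Ring A] (a b c d f : A)
    (hab : a*b = b*a + c) (hac : a*c = c*a + 2*d)
    (had : a*d = d*a + 3*f) (hbc : b*c = c*b + f) :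
    (a^3 - 6*b*a + 6*c) * (3*a^2 - 2*b) =
      (3*a^4 - 20*(b*a^2) + 12*b^2 + 12*c*a - 12*d) * a := by
  have h1 : a^2*b = b*a^2 + 2*(c*a) + 2*d := by
    calc a^2*b = a*(a*b) := by noncomm_ring
    _ = a*(b*a+c) := by rw [hab]
    _ = (a*b)*a + a*c := by noncomm_ring
    _ = (b*a+c)*a + (c*a+2*d) := by rw [hab, hac]
    _ = b*a^2 + 2*(c*a) + 2*d := by noncomm_ring
  have h2 : a^3*b = b*a^3 + 3*(c*a^2) + 6*(d*a) + 6*f := by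
    calc a^3*b = a*(a^2*b) := by noncomm_ring
    _ = a*(b*a^2 + 2*(c*a) + 2*d) := by rw [h1]
    _ = (a*b)*a^2 + 2*((a*c)*a) + 2*(a*d) := by noncomm_ring
    _ = (b*a+c)*a^2 + 2*((c*a+2*d)*a) + 2*(d*a+3*f) := by rw [hab, hac, had]
    _ = b*a^3 + 3*(c*a^2) + 6*(d*a) + 6*f := by noncomm_ring
  have h3 : (b*a)*b = b^2*a + c*b + f := by
    calc (b*a)*b = b*(a*b) := by noncomm_ring
    _ = b*(b*a+c) := by rw [hab]
    _ = b^2*a + b*c := by noncomm_ring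
    _ = b^2*a + (c*b + f) := by rw [hbc]
    _ = b^2*a + c*b + f := by noncomm_ring
  have expand : (a^3 - 6*b*a + 6*c) * (3*a^2 - 2*b)
      = 3*a^5 - 18*(b*a^3) + 18*(c*a^2) - 2*(a^3*b) + 12*((b*a)*b) - 12*(c*b) := by
    noncomm_ring
  rw [expand, h2, h3]
  noncomm_ring

/-- In the universal enveloping algebra of the Lie algebra `L₁` — given by elements
`e i` (`i ≥ 1`) with `⁅e i, e j⁆ = (j - i) • e (i+j)` — the identity
`(e₁³ - 6e₂e₁ + 6e₃)(e₁² - (2/3)e₂) = (e₁⁴ - (20/3)e₂e₁² + 4e₂² + 4e₃e₁ - 4e₄)e₁` holds. -/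
theorem envAlg_identity (L : Type*) [LieRing L] [LieAlgebra ℚ L]
    (e : ℕ → L)
    (he : ∀ i j : ℕ, 1 ≤ i → 1 ≤ j → ⁅e i, e j⁆ = (((j : ℚ) - (i : ℚ))) • e (i + j)) :
    letI E : ℕ → UniversalEnvelopingAlgebra ℚ L := fun i => ι ℚ (e i)
    (E 1 ^ 3 - 6 * E 2 * E 1 + 6 * E 3) * (E 1 ^ 2 - (2/3 : ℚ) • E 2) =
      (E 1 ^ 4 - (20/3 : ℚ) • (E 2 * E 1 ^ 2) + 4 * E 2 ^ 2 + 4 * E 3 * E 1 - 4 * E 4) * E 1 := by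
  set A := UniversalEnvelopingAlgebra ℚ L
  set a : A := ι ℚ (e 1) with ha
  set b : A := ι ℚ (e 2) with hb
  set c : A := ι ℚ (e 3) with hc
  set d : A := ι ℚ (e 4) with hd
  set f : A := ι ℚ (e 5) with hf
  have qmul : ∀ (n : ℕ) (x : A), ((n : ℚ)) • x = (n : A) * x := by
    intro n x
    rw [Nat.cast_smul_eq_nsmul, nsmul_eq_mul]
  have comm : ∀ i j : ℕ, 1 ≤ i → 1 ≤ j →
      (ι ℚ (e i) : A) * ι ℚ (e j)
        = ι ℚ (e j) * ι ℚ (e i) + (((j:ℚ) - (i:ℚ))) • ι ℚ (e (i+j)) := by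
    intro i j hi hj
    letI := LieRing.ofAssociativeRing (A := A)
    have h := (ι ℚ : L →ₗ⁅ℚ⁆ A).map_lie (e i) (e j)
    rw [he i j hi hj, Ring.lie_def, map_smul] at h
    rw [add_comm]
    exact eq_add_of_sub_eq h.symm
  have hab : a*b = b*a + c := by
    have h := comm 1 2 (by norm_num) (by norm_num); push_cast at h
    rw [show ((2:ℚ)-(1:ℚ)) = 1 by norm_num, one_smul] at h
    exact h
  have hac : a*c = c*a + 2*d := by
    have h := comm 1 3 (by norm_num) (by norm_num); push_cast at h
    rw [show ((3:ℚ)-(1:ℚ)) = ((2:ℕ):ℚ) by norm_num, qmul, Nat.cast_ofNat] at h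
    exact h
  have had : a*d = d*a + 3*f := by
    have h := comm 1 4 (by norm_num) (by norm_num); push_cast at h
    rw [show ((4:ℚ)-(1:ℚ)) = ((3:ℕ):ℚ) by norm_num, qmul, Nat.cast_ofNat] at h
    exact h
  have hbc : b*c = c*b + f := by
    have h := comm 2 3 (by norm_num) (by norm_num); push_cast at h
    rw [show ((3:ℚ)-(2:ℚ)) = 1 by norm_num, one_smul] at h
    exact h
  have hk := key a b c d f hab hac had hbc
  have q3 : ∀ x : A, (3:ℚ) • x = 3 * x := by
    intro x; rw [show (3:ℚ) = ((3:ℕ):ℚ) by norm_num, qmul, Nat.cast_ofNat]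
  have q2 : ∀ x : A, (2:ℚ) • x = 2 * x := by
    intro x; rw [show (2:ℚ) = ((2:ℕ):ℚ) by norm_num, qmul, Nat.cast_ofNat]
  have q20 : ∀ x : A, (20:ℚ) • x = 20 * x := by
    intro x; rw [show (20:ℚ) = ((20:ℕ):ℚ) by norm_num, qmul, Nat.cast_ofNat]
  have h3 : ((3:ℚ) • ((a ^ 3 - 6 * b * a + 6 * c) * (a ^ 2 - (2/3 : ℚ) • b)) : A) =
      (3:ℚ) • ((a ^ 4 - (20/3 : ℚ) • (b * a ^ 2) + 4 * b ^ 2 + 4 * c * a - 4 * d) * a) := by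
    rw [← mul_smul_comm, ← smul_mul_assoc, smul_sub, smul_smul,
        smul_sub, smul_add, smul_add, smul_sub, smul_smul]
    norm_num
    rw [q3, q2, q3, q20, q3, q3, q3]
    calc (a^3 - 6*b*a + 6*c) * (3*a^2 - 2*b)
        = (3*a^4 - 20*(b*a^2) + 12*b^2 + 12*c*a - 12*d) * a := hk
      _ = (3*a^4 - 20*(b*a^2) + 3*(4*b^2) + 3*(4*c*a) - 3*(4*d)) * a := by simp only [← mul_assoc]; norm_num
  exact smul_right_injective A (by norm_num : (3:ℚ) ≠ 0) h3
end

section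
/- In the Chevalley–Eilenberg complex of the Lie algebra L₁, the 2-cochain e² ∧ e⁵ - 3 e³ ∧ e⁴ is closed (where eⁱ denotes the dual basis element to e_i), and it is not a coboundary. -/
/-- The 2-cochain `e² ∧ e⁵ - 3 e³ ∧ e⁴` on `L₁`, recorded by its values
`c i j = (e² ∧ e⁵ - 3 e³ ∧ e⁴)(e_i, e_j)`. -/
def c (i j : ℕ) : ℚ :=
  if i = 2 ∧ j = 5 then 1 else if i = 5 ∧ j = 2 then -1
  else if i = 3 ∧ j = 4 then -3 else if i = 4 ∧ j = 3 then 3 else 0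

lemma c_zero {m n : ℕ} (h : m + n ≠ 7) : c m n = 0 := by
  unfold c; split_ifs with h1 h2 h3 h4 <;> first | rfl | omega

/-- In the Chevalley–Eilenberg complex of `L₁` (basis `e_i`, `i ≥ 1`,
`[e_i,e_j] = (j-i)e_{i+j}`), the 2-cochain `e² ∧ e⁵ - 3e³ ∧ e⁴` is closed:
`dc(e_i,e_j,e_k) = -c([e_i,e_j],e_k) + c([e_i,e_k],e_j) - c([e_j,e_k],e_i) = 0`;
and it is not a coboundary: for every 1-cochain `b` (with
`db(e_i,e_j) = -b([e_i,e_j]) = -(j-i) b(i+j)`) some value of `c` differs from `db`. -/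
theorem cocycle_g2_plus_closed_not_exact :
    (∀ i j k : ℕ, 1 ≤ i → 1 ≤ j → 1 ≤ k →
      -(((j : ℚ) - i) * c (i + j) k) + ((k : ℚ) - i) * c (i + k) j
        - ((k : ℚ) - j) * c (j + k) i = 0) ∧
    (∀ b : ℕ → ℚ, ∃ i j : ℕ, 1 ≤ i ∧ 1 ≤ j ∧ c i j ≠ -(((j : ℚ) - i) * b (i + j))) := by
  constructor
  · intro i j k hi hj hk
    by_cases h : i + j + k = 7
    · have hi5 : i ≤ 5 := by omega
      have hj5 : j ≤ 5 := by omega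
      have hk5 : k ≤ 5 := by omega
      interval_cases i <;> interval_cases j <;> interval_cases k <;>
        simp_all [c] <;> norm_num
    · rw [c_zero (by omega), c_zero (by omega), c_zero (by omega)]
      ring
  · intro b
    by_cases h : b 7 = 3
    · refine ⟨2, 5, by norm_num, by norm_num, ?_⟩
      show c 2 5 ≠ _
      simp [c, h]; norm_num
    · refine ⟨3, 4, by norm_num, by norm_num, ?_⟩
      show c 3 4 ≠ _
      simp [c]
      intro hb
      apply h
      linarith
end
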